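/- Let m ≥ 2 and n ≥ 1. Suppose A ∈ ℝ^{[m,n]} is a nonsingular M-tensor, x ∈ ℝⁿ is a positive vector, and the vector A x^{m-1} is positive. Then the n×n matrix Â x^{m-2} is nonsingular (invertible), where Â is the partial symmetrization of A. -/

import Mathlib

/-!
We model an `m`-th order, `n`-dimensional real tensor with `m = k + 2` (so `m ≥ 2`)
as a map `Fin n → (Fin (k+1) → Fin n) → ℝ`: the first index, followed by the
`m - 1 = k + 1` trailing indices.
-/

noncomputable section

/-- The vector `A x^{m-1}`. -/
def tvec (n k : ℕ) (A : Fin n → (Fin (k + 1) → Fin n) → ℝ) (x : Fin n → ℝ) :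
    Fin n → ℝ :=
  fun i => ∑ g : Fin (k + 1) → Fin n, A i g * ∏ j, x (g j)

/-- The `n × n` matrix `A x^{m-2}`, with `(i,j)` entry
`∑_{i₃,…,i_m} A_{i j i₃ ⋯ i_m} x_{i₃} ⋯ x_{i_m}`. -/
def tmat (n k : ℕ) (A : Fin n → (Fin (k + 1) → Fin n) → ℝ) (x : Fin n → ℝ) :
    Matrix (Fin n) (Fin n) ℝ :=
  fun i j => ∑ h : Fin k → Fin n, A i (Fin.cons j h) * ∏ l, x (h l)

/-- The identity tensor `I`: entries `1` when all indices coincide, `0` otherwise. -/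
def idT (n k : ℕ) : Fin n → (Fin (k + 1) → Fin n) → ℝ :=
  fun i g => if ∀ j, g j = i then 1 else 0

/-- `lam ∈ ℂ` is an eigenvalue of the tensor `B`: `B x^{m-1} = lam * x^{[m-1]}` for some
nonzero complex vector `x`. -/
def IsEig (n k : ℕ) (B : Fin n → (Fin (k + 1) → Fin n) → ℝ) (lam : ℂ) : Prop :=
  ∃ x : Fin n → ℂ, x ≠ 0 ∧
    ∀ i, ∑ g : Fin (k + 1) → Fin n, (B i g : ℂ) * ∏ j, x (g j) = lam * (x i) ^ (k + 1)

/-- The spectral radius of a tensor: supremum of moduli of its eigenvalues. -/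
def specRad (n k : ℕ) (B : Fin n → (Fin (k + 1) → Fin n) → ℝ) : ℝ :=
  sSup {r : ℝ | ∃ lam : ℂ, IsEig n k B lam ∧ r = ‖lam‖}

/-- A tensor is nonnegative if all its entries are nonnegative. -/
def NonnegT (n k : ℕ) (B : Fin n → (Fin (k + 1) → Fin n) → ℝ) : Prop :=
  ∀ i g, 0 ≤ B i g

/-- `A` is a nonsingular M-tensor: `A = s I - B` with `B` nonnegative and `s > ρ(B)`. -/
def IsNsMTensor (n k : ℕ) (A : Fin n → (Fin (k + 1) → Fin n) → ℝ) : Prop :=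
  ∃ s : ℝ, ∃ B : Fin n → (Fin (k + 1) → Fin n) → ℝ,
    NonnegT n k B ∧ specRad n k B < s ∧
    A = fun i g => s * idT n k i g - B i g

/-- The partial symmetrization `Â` of `A` over the trailing `m - 1` indices. -/
def psym (n k : ℕ) (A : Fin n → (Fin (k + 1) → Fin n) → ℝ) :
    Fin n → (Fin (k + 1) → Fin n) → ℝ :=
  fun i g => (1 / (Nat.factorial (k + 1) : ℝ)) *
    ∑ π : Equiv.Perm (Fin (k + 1)), A i (g ∘ π)

end


open Finset

-- sum over g of F(g∘π) * ∏ x(g j) is permutation invariant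
lemma perm_sum (n k : ℕ) (F : (Fin (k+1) → Fin n) → ℝ) (y : Fin n → ℝ)
    (π : Equiv.Perm (Fin (k+1))) :
    ∑ g : Fin (k+1) → Fin n, F (g ∘ π) * ∏ j, y (g j)
      = ∑ g : Fin (k+1) → Fin n, F g * ∏ j, y (g j) := by
  let e : (Fin (k+1) → Fin n) ≃ (Fin (k+1) → Fin n) :=
    Equiv.arrowCongr π.symm (Equiv.refl (Fin n))
  rw [← Equiv.sum_comp e (fun g => F g * ∏ j, y (g j))]
  refine Finset.sum_congr rfl (fun g _ => ?_)
  have he : e g = g ∘ π := by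
    funext j; simp [e, Equiv.arrowCongr]
  rw [he]
  congr 1
  exact (Equiv.prod_comp π (fun j => y (g j))).symm

lemma tvec_psym (n k : ℕ) (A : Fin n → (Fin (k+1) → Fin n) → ℝ) (x : Fin n → ℝ) :
    tvec n k (psym n k A) x = tvec n k A x := by
  funext i
  simp only [tvec, psym]
  simp_rw [mul_assoc, ← Finset.mul_sum]
  have : ∑ g : Fin (k+1) → Fin n,
      (∑ π : Equiv.Perm (Fin (k+1)), A i (g ∘ π)) * ∏ j, x (g j)
      = (Nat.factorial (k+1) : ℝ) * ∑ g : Fin (k+1) → Fin n, A i g * ∏ j, x (g j) := by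
    simp_rw [Finset.sum_mul]
    rw [Finset.sum_comm]
    rw [Finset.sum_congr rfl (fun π _ => perm_sum n k (A i) x π)]
    rw [Finset.sum_const, Finset.card_univ, Fintype.card_perm, Fintype.card_fin, nsmul_eq_mul]
  rw [this, ← mul_assoc]
  field_simp [Nat.factorial_ne_zero]

lemma tmat_mulVec (n k : ℕ) (T : Fin n → (Fin (k+1) → Fin n) → ℝ) (x : Fin n → ℝ) (i : Fin n) :
    (tmat n k T x).mulVec x i = tvec n k T x i := by
  rw [tvec, ← Equiv.sum_comp (Fin.consEquiv (fun _ : Fin (k+1) => Fin n))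
    (fun g => T i g * ∏ j, x (g j)), Fintype.sum_prod_type]
  simp only [Matrix.mulVec, dotProduct, tmat, Fin.consEquiv]
  refine Finset.sum_congr rfl fun j _ => ?_
  rw [Finset.sum_mul]
  refine Finset.sum_congr rfl fun h _ => ?_
  rw [Fin.prod_univ_succ]
  simp only [Equiv.coe_fn_mk, Fin.cons_zero, Fin.cons_succ]
  ring

lemma psym_idT (n k : ℕ) : psym n k (idT n k) = idT n k := by
  funext i g
  simp only [psym, idT]
  have hiff : ∀ π : Equiv.Perm (Fin (k+1)), (∀ j, (g ∘ π) j = i) ↔ (∀ j, g j = i) := by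
    intro π
    constructor
    · intro h j; simpa using h (π.symm j)
    · intro h j; exact h (π j)
  rw [Finset.sum_congr rfl (fun π _ => if_congr (hiff π) rfl rfl)]
  rw [Finset.sum_const, Finset.card_univ, Fintype.card_perm, Fintype.card_fin, nsmul_eq_mul]
  rw [← mul_assoc]
  field_simp [Nat.factorial_ne_zero]

lemma psym_split (n k : ℕ) (s : ℝ) (B : Fin n → (Fin (k+1) → Fin n) → ℝ) (i : Fin n)
    (g : Fin (k+1) → Fin n) :
    psym n k (fun i g => s * idT n k i g - B i g) i g
      = s * idT n k i g - psym n k B i g := by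
  have h1 : psym n k (fun i g => s * idT n k i g - B i g) i g
      = s * psym n k (idT n k) i g - psym n k B i g := by
    simp only [psym, Finset.sum_sub_distrib, mul_sub, Finset.mul_sum]
    congr 1
    exact Finset.sum_congr rfl fun π _ => by ring
  rw [h1, psym_idT]

lemma psym_nonneg (n k : ℕ) (B : Fin n → (Fin (k+1) → Fin n) → ℝ) (hB : NonnegT n k B) :
    NonnegT n k (psym n k B) := by
  intro i g
  apply mul_nonneg
  · positivity
  · exact Finset.sum_nonneg fun π _ => hB i _

theorem psym_tmat_invertible' (k n : ℕ) (hn : 1 ≤ n)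
    (A : Fin n → (Fin (k + 1) → Fin n) → ℝ) (hA : IsNsMTensor n k A)
    (x : Fin n → ℝ) (hx : ∀ i, 0 < x i)
    (hAx : ∀ i, 0 < tvec n k A x i) :
    IsUnit (tmat n k (psym n k A) x) := by
  obtain ⟨s, B, hB, -, hAeq⟩ := hA
  set M := tmat n k (psym n k A) x with hM
  -- off-diagonal entries nonpositive
  have hoff : ∀ i j : Fin n, i ≠ j → M i j ≤ 0 := by
    intro i j hij
    rw [hM, tmat]
    apply Finset.sum_nonpos
    intro h _
    have hid : idT n k i (Fin.cons j h) = 0 := by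
      rw [idT]
      simp only [ite_eq_right_iff]
      intro hall
      exact absurd (hall 0).symm (by simpa using hij)
    have : psym n k A i (Fin.cons j h) = - psym n k B i (Fin.cons j h) := by
      rw [hAeq, psym_split, hid]; ring
    rw [this]
    apply mul_nonpos_of_nonpos_of_nonneg
    · simpa using psym_nonneg n k B hB i (Fin.cons j h)
    · exact Finset.prod_nonneg fun l _ => (hx (h l)).le
  -- row "sums" positivity
  have hrow : ∀ i, M.mulVec x i = tvec n k A x i := by
    intro i
    rw [hM, tmat_mulVec, tvec_psym]
  -- strict diagonal dominance of M * diagonal x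
  set N := M * Matrix.diagonal x with hN
  have hNentry : ∀ i j, N i j = M i j * x j := fun i j => Matrix.mul_diagonal ..
  have hdom : ∀ i, ∑ j ∈ Finset.univ.erase i, ‖N i j‖ < ‖N i i‖ := by
    intro i
    have h1 : ∑ j ∈ Finset.univ.erase i, ‖N i j‖
        = -(∑ j ∈ Finset.univ.erase i, M i j * x j) := by
      rw [← Finset.sum_neg_distrib]
      refine Finset.sum_congr rfl fun j hj => ?_
      have hji : i ≠ j := fun h => (Finset.mem_erase.mp hj).1 h.symm
      rw [hNentry, Real.norm_eq_abs, abs_of_nonpos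
        (mul_nonpos_of_nonpos_of_nonneg (hoff i j hji) (hx j).le)]
    have h2 : ∑ j ∈ Finset.univ.erase i, M i j * x j
        = M.mulVec x i - M i i * x i := by
      rw [Finset.sum_erase_eq_sub (Finset.mem_univ i)]
      simp [Matrix.mulVec, dotProduct]
    rw [h1, h2, hrow]
    have h3 : M i i * x i - tvec n k A x i < M i i * x i := by
      have := hAx i; linarith
    calc -(tvec n k A x i - M i i * x i) = M i i * x i - tvec n k A x i := by ring
      _ < M i i * x i := h3
      _ ≤ ‖N i i‖ := by rw [hNentry, Real.norm_eq_abs]; exact le_abs_self _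
  have hNdet : N.det ≠ 0 := det_ne_zero_of_sum_row_lt_diag hdom
  have hMdet : M.det ≠ 0 := by
    intro h
    apply hNdet
    rw [hN, Matrix.det_mul, h, zero_mul]
  rw [Matrix.isUnit_iff_isUnit_det]
  exact isUnit_iff_ne_zero.mpr hMdet

/-- If `A` is a nonsingular M-tensor, `x` is positive, and `A x^{m-1}` is
positive, then the matrix `Â x^{m-2}` is invertible. -/
theorem psym_tmat_invertible (k n : ℕ) (hn : 1 ≤ n)
    (A : Fin n → (Fin (k + 1) → Fin n) → ℝ) (hA : IsNsMTensor n k A)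
    (x : Fin n → ℝ) (hx : ∀ i, 0 < x i)
    (hAx : ∀ i, 0 < tvec n k A x i) :
    IsUnit (tmat n k (psym n k A) x) := psym_tmat_invertible' k n hn A hA x hx hAx
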